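/- The function h(u) = u - (ln u)/(1 - 1/u) is strictly increasing on (1, ∞), tends to 0 as u → 1⁺, and tends to ∞ as u → ∞. Consequently, for every k > 0 there exists a unique u = u(k) > 1 satisfying k = u - (ln u)/(1 - 1/u). -/

import Mathlib

open Real Filter Set

lemma hne1 {u : ℝ} (hu : 1 < u) : (0:ℝ) < 1 - 1/u := by
  have hu0 : (0:ℝ) < u := by linarith
  have : 1/u < 1 := by rw [div_lt_one hu0]; linarith
  linarith

lemma hderiv {u : ℝ} (hu : 1 < u) :
    HasDerivAt (fun u : ℝ => u - Real.log u / (1 - 1 / u))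
      (1 - (u⁻¹ * (1 - 1/u) - Real.log u * (u^2)⁻¹) / (1 - 1/u)^2) u := by
  have hu0 : u ≠ 0 := by positivity
  have d1 : HasDerivAt Real.log u⁻¹ u := Real.hasDerivAt_log hu0
  have d2 : HasDerivAt (fun u : ℝ => 1 - 1/u) ((u^2)⁻¹) u := by
    have := (hasDerivAt_inv hu0).const_sub 1
    simpa [one_div, neg_neg] using this
  exact (hasDerivAt_id u).sub (d1.div d2 (hne1 hu).ne')

lemma dpos {u : ℝ} (hu : 1 < u) :
    0 < 1 - (u⁻¹ * (1 - 1/u) - Real.log u * (u^2)⁻¹) / (1 - 1/u)^2 := by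
  have hu0 : (0:ℝ) < u := by linarith
  have hinv : u * (1/u) = 1 := by field_simp
  have hlog : 1 - 1/u < Real.log u := by
    have h := Real.log_lt_sub_one_of_pos (x := u⁻¹) (by positivity)
      (by intro h; rw [inv_eq_one] at h; linarith)
    rw [Real.log_inv] at h
    have : 1/u = u⁻¹ := one_div u
    linarith
  have hlog2 : u - 1 < u * Real.log u := by nlinarith [hlog]
  have key : u - 1 - Real.log u < (u-1)^2 := by
    have h2 : u * (u - 1 - Real.log u) < u * (u-1)^2 := by nlinarith [mul_nonneg (sq_nonneg (u-1)) (by linarith : (0:ℝ) ≤ u - 1)]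
    exact lt_of_mul_lt_mul_left h2 hu0.le
  have hne := hne1 hu
  rw [sub_pos, div_lt_one (by positivity)]
  have e1 : (1 - 1/u) = (u-1)/u := by field_simp
  rw [e1, div_pow, lt_div_iff₀ (by positivity)]
  calc (u⁻¹ * ((u-1)/u) - Real.log u * (u^2)⁻¹) * u^2
      = (u - 1) - Real.log u := by field_simp
    _ < (u-1)^2 := key

lemma hcont : ContinuousOn (fun u : ℝ => u - Real.log u / (1 - 1 / u)) (Set.Ioi 1) := by
  intro x hx
  exact ((hderiv hx).continuousAt).continuousWithinAt

lemma hmono : StrictMonoOn (fun u : ℝ => u - Real.log u / (1 - 1 / u)) (Set.Ioi 1) := by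
  apply strictMonoOn_of_deriv_pos (convex_Ioi 1) hcont
  intro x hx
  rw [interior_Ioi] at hx
  rw [(hderiv hx).deriv]
  exact dpos hx

lemma hlim0 : Filter.Tendsto (fun u : ℝ => u - Real.log u / (1 - 1 / u))
    (nhdsWithin 1 (Set.Ioi 1)) (nhds 0) := by
  have hslope : Filter.Tendsto (fun u : ℝ => Real.log u / (u - 1))
      (nhdsWithin 1 (Set.Ioi 1)) (nhds 1) := by
    have h := (hasDerivAt_iff_tendsto_slope.mp (Real.hasDerivAt_log one_ne_zero))
    rw [inv_one] at h
    have h2 := h.mono_left (nhdsWithin_mono 1 (fun x hx => ne_of_gt hx))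
    refine h2.congr (fun x => ?_)
    simp [slope, Real.log_one]
    ring
  have hid : Filter.Tendsto (fun u : ℝ => u) (nhdsWithin 1 (Set.Ioi 1)) (nhds 1) :=
    tendsto_id.mono_left nhdsWithin_le_nhds
  have := hid.sub (hid.mul hslope)
  rw [mul_one, sub_self] at this
  refine this.congr' ?_
  filter_upwards [self_mem_nhdsWithin] with u (hu : 1 < u)
  have hu0 : u ≠ 0 := by positivity
  have e1 : (1 - 1/u) = (u-1)/u := by field_simp
  rw [e1, div_div_eq_mul_div]
  ring

lemma hlimtop : Filter.Tendsto (fun u : ℝ => u - Real.log u / (1 - 1 / u))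
    Filter.atTop Filter.atTop := by
  apply Filter.tendsto_atTop_mono' _ _ (Filter.tendsto_id.atTop_div_const (by norm_num : (0:ℝ) < 2))
  filter_upwards [Filter.eventually_ge_atTop (64:ℝ)] with u hu
  have hu1 : (1:ℝ) < u := by linarith
  have hu0 : (0:ℝ) < u := by linarith
  have hs : Real.sqrt u ^ 2 = u := Real.sq_sqrt hu0.le
  have hs0 : 0 ≤ Real.sqrt u := Real.sqrt_nonneg u
  have hs8 : 8 ≤ Real.sqrt u := by nlinarith
  have hlogs : Real.log (Real.sqrt u) ≤ Real.sqrt u - 1 :=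
    Real.log_le_sub_one_of_pos (by positivity)
  have hlog : Real.log u ≤ 2 * Real.sqrt u := by
    have := Real.log_sqrt hu0.le
    nlinarith
  have hlog0 : 0 ≤ Real.log u := Real.log_nonneg hu1.le
  have e1 : (1 - 1/u) = (u-1)/u := by field_simp
  have hdiv : Real.log u / (1 - 1/u) ≤ u / 2 := by
    rw [e1, div_div_eq_mul_div, div_le_iff₀ (by linarith)]
    have h8 : Real.sqrt u ≤ u/8 := by nlinarith
    nlinarith [mul_le_mul_of_nonneg_right hlog hu0.le, mul_le_mul_of_nonneg_right h8 hu0.le]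
  simp only [id_eq]
  linarith

theorem stmt1 :
    StrictMonoOn (fun u : ℝ => u - Real.log u / (1 - 1 / u)) (Set.Ioi 1) ∧
    Filter.Tendsto (fun u : ℝ => u - Real.log u / (1 - 1 / u))
      (nhdsWithin 1 (Set.Ioi 1)) (nhds 0) ∧
    Filter.Tendsto (fun u : ℝ => u - Real.log u / (1 - 1 / u))
      Filter.atTop Filter.atTop ∧
    (∀ k : ℝ, 0 < k → ∃! u : ℝ, 1 < u ∧ k = u - Real.log u / (1 - 1 / u)) := by
  set f : ℝ → ℝ := fun u => u - Real.log u / (1 - 1 / u) with hf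
  refine ⟨hmono, hlim0, hlimtop, fun k hk => ?_⟩
  -- existence
  obtain ⟨a, ha1, hak⟩ : ∃ a, 1 < a ∧ f a < k := by
    have h1 : ∀ᶠ u in nhdsWithin 1 (Set.Ioi 1), f u < k := hlim0.eventually_lt_const hk
    have h2 : ∀ᶠ u in nhdsWithin (1:ℝ) (Set.Ioi 1), (1:ℝ) < u := self_mem_nhdsWithin
    exact ((h2.and h1).exists)
  obtain ⟨b, hab, hbk⟩ : ∃ b, a < b ∧ k < f b := by
    have h1 : ∀ᶠ u in Filter.atTop, k < f u := hlimtop.eventually_gt_atTop k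
    have h2 : ∀ᶠ u : ℝ in Filter.atTop, a < u := Filter.eventually_gt_atTop a
    exact (h2.and h1).exists
  have hIcc : Set.Icc a b ⊆ Set.Ioi 1 := fun x hx => lt_of_lt_of_le ha1 hx.1
  have hcont' : ContinuousOn f (Set.Icc a b) := hcont.mono hIcc
  have hiv := intermediate_value_Ioo hab.le hcont'
  have hk' : k ∈ Set.Ioo (f a) (f b) := ⟨hak, hbk⟩
  obtain ⟨u, hu, hfu⟩ := hiv hk'
  have hu1 : 1 < u := lt_trans ha1 hu.1
  refine ⟨u, ⟨hu1, show k = f u from hfu.symm⟩, ?_⟩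
  rintro v ⟨hv1, hvk⟩
  exact hmono.injOn hv1 hu1 (show f v = f u by rw [hfu]; exact hvk.symm)
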